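/- arXiv:1801.08090 — 2 statements merged into one kernel-verified Lean document; each statement's English description precedes it below -/
import Mathlib

section
/- Distribution of each operator over itself: for compatible channels C₁ : X×Y₁ → ℝ, C₂ : X×Y₂ → ℝ, C₃ : X×Y₃ → ℝ and p, q ∈ [0,1], (i) (C₁ ∥ C₂) ∥ (C₁ ∥ C₃) ⊑ C₁ ∥ (C₂ ∥ C₃); (ii) C₁ ⊞_p (C₂ ⊞_q C₃) ≡ (C₁ ⊞_p C₂) ⊞_q (C₁ ⊞_p C₃); and (iii) C₁ ⊕_p (C₂ ⊕_q C₃) = (C₁ ⊕_p C₂) ⊕_q (C₁ ⊕_p C₃). -/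
open Finset

/-- A channel with input set `X` and output set `Y`: entries are nonnegative
and each row sums to `1`. -/
def IsChannel {X Y : Type*} [Fintype Y] (C : X → Y → ℝ) : Prop :=
  (∀ x y, 0 ≤ C x y) ∧ ∀ x, ∑ y, C x y = 1

/-- A channel with input set `X` whose output set is the finset `S` of a common
ambient type `Ω`: entries are nonnegative, each row sums to `1` over `S`, and
entries vanish outside `S`. -/
def IsChannelOn {X Ω : Type*} (S : Finset Ω) (C : X → Ω → ℝ) : Prop :=
  (∀ x y, 0 ≤ C x y) ∧ (∀ x, ∑ y ∈ S, C x y = 1) ∧ ∀ x y, y ∉ S → C x y = 0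

/-- Parallel composition `C₁ ∥ C₂`. -/
def par {X Y₁ Y₂ : Type*} (C₁ : X → Y₁ → ℝ) (C₂ : X → Y₂ → ℝ) : X → Y₁ × Y₂ → ℝ :=
  fun x y => C₁ x y.1 * C₂ x y.2

/-- Visible choice `C₁ ⊞_p C₂`, on the disjoint union of the output sets. -/
def vis {X Y₁ Y₂ : Type*} (p : ℝ) (C₁ : X → Y₁ → ℝ) (C₂ : X → Y₂ → ℝ) : X → Y₁ ⊕ Y₂ → ℝ :=
  fun x => Sum.elim (fun y => p * C₁ x y) (fun y => (1 - p) * C₂ x y)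

/-- Hidden choice `C₁ ⊕_p C₂` for channels whose output sets lie in a common
ambient type (pointwise convex combination; this agrees with the case analysis
on `Y₁ ∩ Y₂`, `Y₁ \ Y₂`, `Y₂ \ Y₁` since channels vanish outside their output sets). -/
def hid {X Ω : Type*} (p : ℝ) (C₁ C₂ : X → Ω → ℝ) : X → Ω → ℝ :=
  fun x y => p * C₁ x y + (1 - p) * C₂ x y

/-- Equality up to a permutation of the output set, `C₁ ≐ C₂`. -/
def PermEq {X Y₁ Y₂ : Type*} (C₁ : X → Y₁ → ℝ) (C₂ : X → Y₂ → ℝ) : Prop :=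
  ∃ ψ : Y₁ ≃ Y₂, ∀ x y, C₁ x y = C₂ x (ψ y)

/-- Cascading `CD` of channels. -/
def cascade {X Y Z : Type*} [Fintype Y] (C : X → Y → ℝ) (D : Y → Z → ℝ) : X → Z → ℝ :=
  fun x z => ∑ y, C x y * D y z

/-- `Refines C₁ C₂` (written `C₁ ⊑ C₂`): there is a channel `D` with `C₁D = C₂`. -/
def Refines {X Y₁ Y₂ : Type*} [Fintype Y₁] [Fintype Y₂] (C₁ : X → Y₁ → ℝ)
    (C₂ : X → Y₂ → ℝ) : Prop :=
  ∃ D : Y₁ → Y₂ → ℝ, IsChannel D ∧ cascade C₁ D = C₂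

/-- Equivalence of channels: mutual refinement. -/
def EquivCh {X Y₁ Y₂ : Type*} [Fintype Y₁] [Fintype Y₂] (C₁ : X → Y₁ → ℝ)
    (C₂ : X → Y₂ → ℝ) : Prop :=
  Refines C₁ C₂ ∧ Refines C₂ C₁

/-- A prior: a probability distribution on the finite input set `X`. -/
def IsPrior {X : Type*} [Fintype X] (π : X → ℝ) : Prop :=
  (∀ x, 0 ≤ π x) ∧ ∑ x, π x = 1

/-- A gain function `g : W × X → [0,1]`. -/
def IsGain {W X : Type*} (g : W → X → ℝ) : Prop :=
  ∀ w x, 0 ≤ g w x ∧ g w x ≤ 1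

/-- Posterior g-vulnerability `V_g[π, C]`. -/
noncomputable def postV {W X Y : Type*} [Fintype W] [Nonempty W] [Fintype X] [Fintype Y]
    (π : X → ℝ) (g : W → X → ℝ) (C : X → Y → ℝ) : ℝ :=
  ∑ y, univ.sup' univ_nonempty fun w => ∑ x, C x y * π x * g w x

lemma sum_univ_eq_one {X Ω : Type*} [Fintype Ω] {S : Finset Ω} {C : X → Ω → ℝ}
    (h : IsChannelOn S C) (x : X) : ∑ y, C x y = 1 := by
  rw [← Finset.sum_subset (Finset.subset_univ S) (fun y _ hy => h.2.2 x y hy)]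
  exact h.2.1 x

/-- Distribution of each operator over itself (Proposition: Distribution over
the same operator). -/
theorem distribution_over_same_operator {X Ω : Type*} [Fintype Ω]
    (Y₁ Y₂ Y₃ : Finset Ω) (C₁ C₂ C₃ : X → Ω → ℝ)
    (h₁ : IsChannelOn Y₁ C₁) (h₂ : IsChannelOn Y₂ C₂) (h₃ : IsChannelOn Y₃ C₃)
    (p q : ℝ) (hp : p ∈ Set.Icc (0:ℝ) 1) (hq : q ∈ Set.Icc (0:ℝ) 1) :
    Refines (par (par C₁ C₂) (par C₁ C₃)) (par C₁ (par C₂ C₃)) ∧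
    EquivCh (vis p C₁ (vis q C₂ C₃)) (vis q (vis p C₁ C₂) (vis p C₁ C₃)) ∧
    hid p C₁ (hid q C₂ C₃) = hid q (hid p C₁ C₂) (hid p C₁ C₃) := by
  classical
  obtain ⟨hp0, hp1⟩ := hp
  obtain ⟨hq0, hq1⟩ := hq
  refine ⟨?_, ⟨?_, ?_⟩, ?_⟩
  · -- part (i)
    refine ⟨fun y z => if (y.1.1, (y.1.2, y.2.2)) = z then 1 else 0, ⟨?_, ?_⟩, ?_⟩
    · intro y z; dsimp only; split <;> norm_num
    · intro y; simp [Finset.sum_ite_eq]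
    · funext x z
      obtain ⟨e, f, g⟩ := z
      have hone := sum_univ_eq_one h₁ x
      simp only [cascade, par, mul_ite, mul_one, mul_zero, Fintype.sum_prod_type,
        Prod.mk.injEq, ite_and]
      simp only [Finset.sum_ite_irrel, Finset.sum_ite_eq', Finset.mem_univ, if_true,
        Finset.sum_const_zero, ← Finset.mul_sum, ← Finset.sum_mul]
      rw [hone]; ring
  · -- part (ii), forward
    classical
    refine ⟨fun a b =>
      q * (if (Sum.elim (fun y => Sum.inl (Sum.inl y))
            (Sum.elim (fun y => Sum.inl (Sum.inr y)) (fun y => Sum.inr (Sum.inr y))) a : (Ω ⊕ Ω) ⊕ (Ω ⊕ Ω)) = b then 1 else 0) +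
      (1 - q) * (if (Sum.elim (fun y => Sum.inr (Sum.inl y))
            (Sum.elim (fun y => Sum.inl (Sum.inr y)) (fun y => Sum.inr (Sum.inr y))) a : (Ω ⊕ Ω) ⊕ (Ω ⊕ Ω)) = b then 1 else 0),
      ⟨?_, ?_⟩, ?_⟩
    · intro a b
      dsimp only
      refine add_nonneg (mul_nonneg hq0 ?_) (mul_nonneg (by linarith) ?_) <;>
        split <;> norm_num
    · intro a
      rw [Finset.sum_add_distrib, ← Finset.mul_sum, ← Finset.mul_sum]
      simp [Finset.sum_ite_eq]
    · funext x z
      rcases z with (z | z) | (z | z) <;>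
        simp [cascade, vis, Fintype.sum_sum_type, mul_ite, mul_add, mul_zero, mul_one,
          Finset.sum_add_distrib, Finset.sum_ite_eq', ← Finset.mul_sum] <;> ring
  · -- part (ii), backward
    classical
    refine ⟨fun a b =>
      if (Sum.elim (Sum.elim (fun y => Sum.inl y) (fun y => Sum.inr (Sum.inl y)))
          (Sum.elim (fun y => Sum.inl y) (fun y => Sum.inr (Sum.inr y))) a : Ω ⊕ (Ω ⊕ Ω)) = b
        then 1 else 0, ⟨?_, ?_⟩, ?_⟩
    · intro a b; dsimp only; split <;> norm_num
    · intro a; simp [Finset.sum_ite_eq]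
    · funext x z
      rcases z with z | (z | z) <;>
        simp [cascade, vis, Fintype.sum_sum_type, mul_ite, mul_zero, mul_one,
          Finset.sum_add_distrib, Finset.sum_ite_eq'] <;> ring
  · funext x y
    simp only [hid]
    ring
end

section
/- Relative monotonicity for parallel composition: let C₁ : X×Y₁ → ℝ and C₂ : X×Y₂ → ℝ be compatible channels. (a) For any fixed gain function g: ( for all priors π' on X, V_g[π',C₁] ≤ V_g[π',C₂] ) if and only if ( for all priors π' on X and all channels C compatible with C₁ and C₂, V_g[π', C₁ ∥ C] ≤ V_g[π', C₂ ∥ C] ). (b) For any fixed prior π on X: ( for all gain functions g', V_{g'}[π,C₁] ≤ V_{g'}[π,C₂] ) if and only if ( for all gain functions g' and all channels C compatible with C₁ and C₂, V_{g'}[π, C₁ ∥ C] ≤ V_{g'}[π, C₂ ∥ C] ). -/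
open Finset

section Helpers

lemma mul_sup'_aux {W : Type*} (s : Finset W) (hs : s.Nonempty) (c : ℝ) (hc : 0 ≤ c)
    (f : W → ℝ) : s.sup' hs (fun w => c * f w) = c * s.sup' hs f := by
  apply le_antisymm
  · apply Finset.sup'_le
    intro w hw
    exact mul_le_mul_of_nonneg_left (Finset.le_sup' f hw) hc
  · obtain ⟨w, hw, hws⟩ := Finset.exists_mem_eq_sup' hs f
    rw [hws]
    exact Finset.le_sup' (fun w => c * f w) hw

lemma sup'_sum_exchange {Z W : Type*} [Fintype Z] [DecidableEq Z] [Fintype W] [Nonempty W]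
    (F : Z → W → ℝ) :
    (univ : Finset (Z → W)).sup' univ_nonempty (fun f => ∑ z, F z (f z))
      = ∑ z, (univ : Finset W).sup' univ_nonempty (F z) := by
  apply le_antisymm
  · apply Finset.sup'_le
    intro f _
    apply Finset.sum_le_sum
    intro z _
    exact Finset.le_sup' (F z) (mem_univ (f z))
  · choose φ hφ1 hφ2 using fun z =>
      Finset.exists_mem_eq_sup' (univ_nonempty : (univ : Finset W).Nonempty) (F z)
    calc ∑ z, (univ : Finset W).sup' univ_nonempty (F z) = ∑ z, F z (φ z) :=
          Finset.sum_congr rfl fun z _ => hφ2 z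
      _ ≤ _ := Finset.le_sup' (fun f => ∑ z, F z (f z)) (mem_univ φ)

lemma postV_zero {W X Y : Type*} [Fintype W] [Nonempty W] [Fintype X] [Fintype Y]
    (σ : X → ℝ) (g : W → X → ℝ) (C : X → Y → ℝ) (hzero : ∀ x, σ x = 0) :
    postV σ g C = 0 := by
  unfold postV
  refine Finset.sum_eq_zero fun y _ => ?_
  have h : (fun w => ∑ x, C x y * σ x * g w x) = fun _ => (0:ℝ) := by
    funext w
    refine Finset.sum_eq_zero fun x _ => by rw [hzero x]; ring
  rw [h, Finset.sup'_const]

/-- `postV` is linear in the prior argument (scaling). -/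
lemma postV_smul {W X Y : Type*} [Fintype W] [Nonempty W] [Fintype X] [Fintype Y]
    (π : X → ℝ) (g : W → X → ℝ) (C : X → Y → ℝ) (c : ℝ) (hc : 0 ≤ c) :
    postV (fun x => c * π x) g C = c * postV π g C := by
  unfold postV
  rw [Finset.mul_sum]
  refine Finset.sum_congr rfl fun y _ => ?_
  rw [← mul_sup'_aux _ _ c hc]
  congr 1
  funext w
  rw [Finset.mul_sum]
  refine Finset.sum_congr rfl fun x _ => ?_
  ring

/-- `postV` comparison for a nonnegative weight vector, given the comparison
for all priors. -/
lemma postV_mono_of_priors {W X Y₁ Y₂ : Type*} [Fintype W] [Nonempty W] [Fintype X]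
    [Fintype Y₁] [Fintype Y₂] (g : W → X → ℝ)
    (C₁ : X → Y₁ → ℝ) (C₂ : X → Y₂ → ℝ)
    (hyp : ∀ π' : X → ℝ, IsPrior π' → postV π' g C₁ ≤ postV π' g C₂)
    (σ : X → ℝ) (hσ : ∀ x, 0 ≤ σ x) :
    postV σ g C₁ ≤ postV σ g C₂ := by
  set c := ∑ x, σ x with hc
  have hc0 : 0 ≤ c := Finset.sum_nonneg fun x _ => hσ x
  rcases eq_or_lt_of_le hc0 with h0 | hpos
  · have hzero : ∀ x, σ x = 0 := fun x =>
      (Finset.sum_eq_zero_iff_of_nonneg (fun x _ => hσ x)).mp h0.symm x (mem_univ x)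
    rw [postV_zero σ g C₁ hzero, postV_zero σ g C₂ hzero]
  · set π' : X → ℝ := fun x => c⁻¹ * σ x with hπ'def
    have hprior : IsPrior π' := by
      constructor
      · intro x; exact mul_nonneg (inv_nonneg.mpr hc0) (hσ x)
      · rw [hπ'def]
        simp only
        rw [← Finset.mul_sum, ← hc, inv_mul_cancel₀ (ne_of_gt hpos)]
    have key := hyp π' hprior
    have hσeq : σ = fun x => c * π' x := by
      funext x
      rw [hπ'def]
      field_simp
    rw [hσeq, postV_smul _ _ C₁ _ hc0, postV_smul _ _ C₂ _ hc0]
    exact mul_le_mul_of_nonneg_left key hc0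

/-- Expansion of the posterior vulnerability of a parallel composition,
grouped by the second output. -/
lemma postV_par_eq {W X Y Z : Type*} [Fintype W] [Nonempty W] [Fintype X]
    [Fintype Y] [Fintype Z]
    (π : X → ℝ) (g : W → X → ℝ) (D : X → Y → ℝ) (C : X → Z → ℝ) :
    postV π g (par D C) = ∑ z, postV (fun x => C x z * π x) g D := by
  unfold postV par
  rw [Fintype.sum_prod_type_right]
  refine Finset.sum_congr rfl fun z _ => Finset.sum_congr rfl fun y _ => ?_
  congr 1
  funext w
  refine Finset.sum_congr rfl fun x _ => by ring

/-- Parallel composition with the trivial one-output channel has the same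
posterior vulnerability. -/
lemma postV_par_trivial {W X Y : Type*} [Fintype W] [Nonempty W] [Fintype X] [Fintype Y]
    (π : X → ℝ) (g : W → X → ℝ) (D : X → Y → ℝ) :
    postV π g (par D (fun (_ : X) (_ : PUnit) => (1:ℝ))) = postV π g D := by
  rw [postV_par_eq]
  simp

/-- Posterior vulnerability of a parallel composition equals the posterior
vulnerability of the first channel under the strategy gain function. -/
lemma postV_par_strategy {W X Y Z : Type*} [Fintype W] [Nonempty W] [Fintype X]
    [Fintype Y] [Fintype Z] [DecidableEq Z]
    (π : X → ℝ) (g : W → X → ℝ) (D : X → Y → ℝ) (C : X → Z → ℝ) :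
    postV π g (par D C)
      = postV π (fun (f : Z → W) x => ∑ z, C x z * g (f z) x) D := by
  unfold postV par
  rw [Fintype.sum_prod_type]
  refine Finset.sum_congr rfl fun y _ => ?_
  rw [← sup'_sum_exchange (fun z w => ∑ x, D x y * C x z * π x * g w x)]
  congr 1
  funext f
  rw [Finset.sum_comm]
  refine Finset.sum_congr rfl fun x _ => ?_
  simp only [Finset.mul_sum]
  refine Finset.sum_congr rfl fun z _ => by ring

end Helpers

/-- Relative monotonicity for parallel composition. -/
theorem relative_monotonicity_parallel {X Y₁ Y₂ : Type*}
    [Fintype X] [Fintype Y₁] [Fintype Y₂]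
    (C₁ : X → Y₁ → ℝ) (C₂ : X → Y₂ → ℝ)
    (h₁ : IsChannel C₁) (h₂ : IsChannel C₂) :
    (∀ (W : Type) [Fintype W] [Nonempty W] (g : W → X → ℝ), IsGain g →
      ((∀ π' : X → ℝ, IsPrior π' → postV π' g C₁ ≤ postV π' g C₂) ↔
        (∀ π' : X → ℝ, IsPrior π' →
          ∀ (Z : Type) [Fintype Z] (C : X → Z → ℝ), IsChannel C →
            postV π' g (par C₁ C) ≤ postV π' g (par C₂ C)))) ∧
    (∀ π : X → ℝ, IsPrior π →
      ((∀ (W' : Type) [Fintype W'] [Nonempty W'] (g' : W' → X → ℝ), IsGain g' →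
          postV π g' C₁ ≤ postV π g' C₂) ↔
        (∀ (W' : Type) [Fintype W'] [Nonempty W'] (g' : W' → X → ℝ), IsGain g' →
          ∀ (Z : Type) [Fintype Z] (C : X → Z → ℝ), IsChannel C →
            postV π g' (par C₁ C) ≤ postV π g' (par C₂ C)))) := by
  have htriv : IsChannel (fun (_ : X) (_ : PUnit) => (1:ℝ)) := by
    constructor
    · intro _ _; norm_num
    · intro _; simp
  constructor
  · -- part (a): fixed gain function
    intro W _ _ g hg
    constructor
    · intro hyp π' hπ' Z _ C hC
      rw [postV_par_eq π' g C₁ C, postV_par_eq π' g C₂ C]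
      refine Finset.sum_le_sum fun z _ => ?_
      exact postV_mono_of_priors g C₁ C₂ hyp _
        (fun x => mul_nonneg (hC.1 x z) (hπ'.1 x))
    · intro hyp π' hπ'
      have h := hyp π' hπ' PUnit (fun _ _ => (1:ℝ)) htriv
      rwa [postV_par_trivial, postV_par_trivial] at h
  · -- part (b): fixed prior
    intro π hπ
    constructor
    · intro hyp W _ _ g hg Z _ C hC
      haveI : DecidableEq Z := Classical.decEq Z
      have hXne : Nonempty X := by
        by_contra h
        haveI : IsEmpty X := not_nonempty_iff.mp h
        have h2 := hπ.2
        simp at h2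
      obtain ⟨x₀⟩ := hXne
      haveI hZne : Nonempty Z := by
        by_contra h
        haveI : IsEmpty Z := not_nonempty_iff.mp h
        have h2 := hC.2 x₀
        simp at h2
      set g' : (Z → W) → X → ℝ := fun f x => ∑ z, C x z * g (f z) x with hg'def
      have hg' : IsGain g' := by
        intro f x
        constructor
        · exact Finset.sum_nonneg fun z _ => mul_nonneg (hC.1 x z) (hg (f z) x).1
        · calc ∑ z, C x z * g (f z) x ≤ ∑ z, C x z * 1 :=
                Finset.sum_le_sum fun z _ =>
                  mul_le_mul_of_nonneg_left (hg (f z) x).2 (hC.1 x z)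
            _ = 1 := by simpa using hC.2 x
      rw [postV_par_strategy π g C₁ C, postV_par_strategy π g C₂ C]
      exact hyp (Z → W) g' hg'
    · intro hyp W _ _ g hg
      have h := hyp W g hg PUnit (fun _ _ => (1:ℝ)) htriv
      rwa [postV_par_trivial, postV_par_trivial] at h
end
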